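/- Let N_q^A(D_d) be the number of points in affine n-space over F_q on the diagonal hypersurface x₁^d + x₂^d + ⋯ + x_n^d = 0, and let t = gcd(d, q-1). Then N_q^A(D_d) = q^{n-1} - (q-1)·∑_{w*} J(T^{w₁(q-1)/t}, …, T^{w_n(q-1)/t}), where the sum is over all tuples w* = (w₁,…,w_n) with 0 < w_i < t for each i and ∑ w_i ≡ 0 (mod t), and T is a fixed generator of the character group of F_q^*. -/

import Mathlib

/-- The Jacobi sum J(χ₁,…,χ_k) with target α. -/
noncomputable def Jsum {F : Type} [Field F] [Fintype F] [DecidableEq F]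
    (k : ℕ) (χ : Fin k → MulChar F ℂ) (α : F) : ℂ :=
  ∑ t ∈ Finset.univ.filter (fun t : Fin k → F => ∑ i, t i = α), ∏ i, χ i (t i)

open Finset

namespace WeilDiagonalAux

variable {F : Type} [Field F] [Fintype F] [DecidableEq F]

lemma orderOf_T (T : MulChar F ℂ) (hT : ∀ χ : MulChar F ℂ, ∃ k : ℕ, χ = T ^ k) :
    orderOf T = Fintype.card F - 1 := by
  haveI : NeZero (Monoid.exponent Fˣ) := ⟨Monoid.exponent_ne_zero_of_finite⟩
  have hcard : Nat.card (MulChar F ℂ) = Fintype.card F - 1 := by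
    rw [MulChar.card_eq_card_units_of_hasEnoughRootsOfUnity F ℂ, Nat.card_eq_fintype_card,
      Fintype.card_units]
  have htop : Subgroup.zpowers T = ⊤ := by
    rw [Subgroup.eq_top_iff']
    intro χ
    obtain ⟨k, rfl⟩ := hT χ
    exact Subgroup.pow_mem _ (Subgroup.mem_zpowers T) k
  rw [← Nat.card_zpowers, htop, ← hcard]
  exact Nat.card_congr Subgroup.topEquiv.toEquiv

lemma T_pow_ne_one (T : MulChar F ℂ) (hT : ∀ χ : MulChar F ℂ, ∃ k : ℕ, χ = T ^ k)
    {k : ℕ} (hk : 0 < k) (hk2 : k < Fintype.card F - 1) : T ^ k ≠ 1 := by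
  intro h
  have h2 := orderOf_dvd_of_pow_eq_one h
  rw [orderOf_T T hT] at h2
  exact absurd (Nat.le_of_dvd hk h2) (not_le.mpr hk2)

lemma T_faithful (T : MulChar F ℂ) (hT : ∀ χ : MulChar F ℂ, ∃ k : ℕ, χ = T ^ k)
    {a : F} (ha : a ≠ 0) (h1 : T a = 1) : a = 1 := by
  haveI : NeZero (Monoid.exponent Fˣ) := ⟨Monoid.exponent_ne_zero_of_finite⟩
  by_contra hne
  obtain ⟨χ, hχ⟩ := MulChar.exists_apply_ne_one_of_hasEnoughRootsOfUnity F ℂ hne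
  obtain ⟨k, rfl⟩ := hT χ
  rcases Nat.eq_zero_or_pos k with rfl | hk
  · rw [pow_zero] at hχ
    exact hχ (MulChar.one_apply (Ne.isUnit ha))
  · exact hχ (by rw [MulChar.pow_apply' _ hk.ne' a, h1, one_pow])

lemma geom_aux {z : ℂ} {t : ℕ} (hz : z ^ t = 1) :
    ∑ j ∈ Finset.range t, z ^ j = if z = 1 then (t : ℂ) else 0 := by
  split_ifs with h
  · simp [h]
  · rw [geom_sum_eq h t, hz, sub_self, zero_div]

lemma solvable_iff (T : MulChar F ℂ) (hT : ∀ χ : MulChar F ℂ, ∃ k : ℕ, χ = T ^ k)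
    {d : ℕ} (hd : 0 < d) {a : F} (ha : a ≠ 0) :
    (∃ x : F, x ^ d = a) ↔
      (T a) ^ ((Fintype.card F - 1) / Nat.gcd d (Fintype.card F - 1)) = 1 := by
  have hq2 : 1 < Fintype.card F := Fintype.one_lt_card
  set Q := Fintype.card F - 1 with hQdef
  have hQ0 : 0 < Q := by omega
  set t := Nat.gcd d Q with htdef
  have ht0 : 0 < t := Nat.gcd_pos_of_pos_left Q hd
  set m := Q / t with hmdef
  have htm : t * m = Q := Nat.mul_div_cancel' (Nat.gcd_dvd_right d Q)
  have hm0 : 0 < m := by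
    rcases Nat.eq_zero_or_pos m with h | h
    · rw [h, mul_zero] at htm; omega
    · exact h
  obtain ⟨d', hd'⟩ := Nat.gcd_dvd_left d Q
  have h1 : d * m = Q * d' := by rw [← htm, hd']; ring
  constructor
  · rintro ⟨x, rfl⟩
    have hx : x ≠ 0 := by
      rintro rfl
      exact ha (by simp [zero_pow hd.ne'])
    calc (T (x ^ d)) ^ m = T (x ^ (d * m)) := by rw [← map_pow, ← pow_mul]
    _ = T ((x ^ Q) ^ d') := by rw [h1, pow_mul]
    _ = 1 := by rw [FiniteField.pow_card_sub_one_eq_one x hx]; simp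
  · intro h
    have ham : a ^ m = 1 := by
      apply T_faithful T hT (pow_ne_zero m ha)
      rw [map_pow, h]
    obtain ⟨g, hg⟩ := IsCyclic.exists_generator (α := Fˣ)
    have hord : orderOf g = Q := by
      rw [orderOf_eq_card_of_forall_mem_zpowers hg, Nat.card_eq_fintype_card,
        Fintype.card_units]
    set u : Fˣ := Units.mk0 a ha with hu
    obtain ⟨k, hk0⟩ := mem_powers_iff_mem_zpowers.mpr (hg u)
    have hk : g ^ k = u := hk0
    have hum : u ^ m = 1 := by
      ext
      push_cast [hu]
      exact ham
    have hdvd : Q ∣ k * m := by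
      rw [← hord]
      apply orderOf_dvd_of_pow_eq_one
      rw [pow_mul, hk, hum]
    have htk : t ∣ k := by
      have h2 : t * m ∣ k * m := by rw [htm]; exact hdvd
      exact (Nat.mul_dvd_mul_iff_right hm0).mp h2
    obtain ⟨k', hk'⟩ := htk
    set A := Nat.gcdA d Q with hA
    set B := Nat.gcdB d Q with hB
    have hbez : (t : ℤ) = d * A + Q * B := Nat.gcd_eq_gcd_ab d Q
    have hgQ : g ^ (Q : ℤ) = 1 := by
      rw [zpow_natCast, ← hord, pow_orderOf_eq_one]
    refine ⟨((g ^ (A * k') : Fˣ) : F), ?_⟩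
    have key : (g ^ (A * (k' : ℤ))) ^ (d : ℤ) = u := by
      rw [← zpow_mul]
      have he : A * (k' : ℤ) * d = k + Q * (B * (-k')) := by
        push_cast [hk']
        have hdA : (d : ℤ) * A = t - Q * B := by rw [hbez]; ring
        calc A * (k' : ℤ) * d = ((d : ℤ) * A) * k' := by ring
        _ = ((t : ℤ) - Q * B) * k' := by rw [hdA]
        _ = (t : ℤ) * k' + Q * (B * (-k')) := by ring
      rw [he, zpow_add, zpow_mul (g) (Q : ℤ), hgQ, one_zpow, mul_one, zpow_natCast, hk]
    have hval : (((g ^ (A * (k' : ℤ)) : Fˣ) : F)) ^ d = a := by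
      have h3 := congrArg (Units.val) key
      push_cast at h3
      simpa [hu] using h3
    simpa using hval

lemma pow_d_iff_pow_t {d : ℕ} (hd : 0 < d) {y : F} :
    y ^ d = 1 ↔ y ^ (Nat.gcd d (Fintype.card F - 1)) = 1 := by
  have ht0 : 0 < Nat.gcd d (Fintype.card F - 1) :=
    Nat.gcd_pos_of_pos_left _ hd
  rcases eq_or_ne y 0 with rfl | hy
  · rw [zero_pow hd.ne', zero_pow ht0.ne']
  · lift y to Fˣ using Ne.isUnit hy with w hw
    have h1 : ∀ k : ℕ, (w : F) ^ k = 1 ↔ w ^ k = 1 := by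
      intro k
      rw [← Units.val_pow_eq_pow_val, Units.ext_iff, Units.val_one]
    rw [h1, h1, pow_gcd_eq_one, ← Fintype.card_units, pow_card_eq_one, eq_self_iff_true, and_true]

lemma count_eq (T : MulChar F ℂ) (hT : ∀ χ : MulChar F ℂ, ∃ k : ℕ, χ = T ^ k)
    {d : ℕ} (hd : 0 < d) (b : F) :
    (((univ.filter fun x : F => x ^ d = b)).card : ℂ)
      = ∑ j ∈ range (Nat.gcd d (Fintype.card F - 1)),
          (if j = 0 then 1 else
            (T ^ (j * ((Fintype.card F - 1) / Nat.gcd d (Fintype.card F - 1)))) b) := by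
  have hq2 : 1 < Fintype.card F := Fintype.one_lt_card
  set Q := Fintype.card F - 1 with hQdef
  have hQ0 : 0 < Q := by omega
  set t := Nat.gcd d Q with htdef
  have ht0 : 0 < t := Nat.gcd_pos_of_pos_left Q hd
  set m := Q / t with hmdef
  have htm : t * m = Q := Nat.mul_div_cancel' (Nat.gcd_dvd_right d Q)
  have hm0 : 0 < m := by
    rcases Nat.eq_zero_or_pos m with h | h
    · rw [h, mul_zero] at htm; omega
    · exact h
  rcases eq_or_ne b 0 with rfl | hb
  · have hfil : (univ.filter fun x : F => x ^ d = 0) = {0} := by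
      ext x
      simp [pow_eq_zero_iff hd.ne']
    rw [hfil]
    have hcong : ∀ j ∈ range t, (if j = 0 then (1:ℂ) else (T ^ (j * m)) 0)
        = if j = 0 then 1 else 0 := by
      intro j hj
      split_ifs with h
      · rfl
      · exact MulChar.map_nonunit _ not_isUnit_zero
    rw [Finset.sum_congr rfl hcong, Finset.sum_ite_eq' (range t) 0 (fun _ => (1:ℂ))]
    simp [Finset.mem_range, ht0]
  · set z : ℂ := (T b) ^ m with hz
    have hzt : z ^ t = 1 := by
      rw [hz, ← pow_mul, mul_comm m t, htm, ← map_pow,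
        FiniteField.pow_card_sub_one_eq_one b hb, map_one]
    have hRHS : ∑ j ∈ range t, (if j = 0 then (1:ℂ) else (T ^ (j * m)) b)
        = if z = 1 then (t : ℂ) else 0 := by
      rw [← geom_aux hzt]
      refine Finset.sum_congr rfl fun j hj => ?_
      rcases eq_or_ne j 0 with rfl | hj0
      · simp
      · rw [if_neg hj0, MulChar.pow_apply' T (Nat.mul_ne_zero hj0 hm0.ne') b, hz,
          ← pow_mul, mul_comm j m]
    rw [hRHS]
    by_cases hsol : ∃ x : F, x ^ d = b
    · have hz1 : z = 1 := (solvable_iff T hT hd hb).mp hsol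
      rw [if_pos hz1]
      obtain ⟨x0, hx0⟩ := hsol
      have hx00 : x0 ≠ 0 := by
        rintro rfl
        exact hb (by rw [← hx0, zero_pow hd.ne'])
      have hcard : (univ.filter fun x : F => x ^ d = b).card
          = (univ.filter fun y : F => y ^ t = 1).card := by
        apply Finset.card_bij' (fun x _ => x / x0) (fun y _ => y * x0)
        · intro x hx
          simp only [mem_filter, mem_univ, true_and] at hx ⊢
          have hxd : (x / x0) ^ d = 1 := by
            rw [div_pow, hx, hx0, div_self hb]
          exact (pow_d_iff_pow_t hd).mp hxd
        · intro y hy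
          simp only [mem_filter, mem_univ, true_and] at hy ⊢
          have hyd : y ^ d = 1 := (pow_d_iff_pow_t hd).mpr hy
          rw [mul_pow, hyd, one_mul, hx0]
        · intro x hx
          exact div_mul_cancel₀ x hx00
        · intro y hy
          exact mul_div_cancel_right₀ y hx00
      rw [hcard]
      obtain ⟨g, hg⟩ := IsCyclic.exists_generator (α := Fˣ)
      have hord : orderOf g = Q := by
        rw [orderOf_eq_card_of_forall_mem_zpowers hg, Nat.card_eq_fintype_card,
          Fintype.card_units]
      have hprimQ : IsPrimitiveRoot g Q := by
        have h4 := IsPrimitiveRoot.orderOf g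
        rwa [hord] at h4
      have hprim : IsPrimitiveRoot ((g ^ m : Fˣ) : F) t := by
        rw [IsPrimitiveRoot.coe_units_iff]
        exact IsPrimitiveRoot.pow hQ0 hprimQ (by rw [← htm, mul_comm])
      have hfil : (univ.filter fun y : F => y ^ t = 1)
          = (Polynomial.nthRoots t (1 : F)).toFinset := by
        ext y
        simp [Polynomial.mem_nthRoots ht0]
      rw [hfil, Multiset.toFinset_card_of_nodup (hprim.nthRoots_one_nodup)]
      rw [hprim.card_nthRoots_one]
    · have hz1 : z ≠ 1 := fun hcon => hsol ((solvable_iff T hT hd hb).mpr hcon)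
      rw [if_neg hz1]
      have hemp : (univ.filter fun x : F => x ^ d = b) = ∅ := by
        rw [Finset.filter_eq_empty_iff]
        intro x _
        exact fun hcon => hsol ⟨x, hcon⟩
      rw [hemp]
      simp

omit [Fintype F] [DecidableEq F] in
lemma prod_mulChar_apply {ι : Type*} (s : Finset ι) (χ : ι → MulChar F ℂ) {a : F} (ha : a ≠ 0) :
    (∏ i ∈ s, χ i) a = ∏ i ∈ s, χ i a := by
  induction s using Finset.cons_induction with
  | empty => exact MulChar.one_apply (Ne.isUnit ha)
  | cons i s hi ih => rw [Finset.prod_cons, MulChar.mul_apply, ih, Finset.prod_cons]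

lemma sum_constrained_eq {n : ℕ} (f : Fin n → F → ℂ) (i0 : Fin n) (hf : ∀ x, f i0 x = 1) :
    ∑ a ∈ univ.filter (fun a : Fin n → F => ∑ i, a i = 0), ∏ i, f i (a i)
      = ∏ i ∈ univ.erase i0, ∑ x : F, f i x := by
  classical
  set B : Fin n → Finset F := fun i => if i = i0 then {0} else univ with hB
  have h2 : ∏ i ∈ univ.erase i0, ∑ x : F, f i x = ∑ p ∈ Fintype.piFinset B, ∏ i, f i (p i) := by
    rw [← Finset.prod_univ_sum]
    rw [← Finset.mul_prod_erase univ (fun i => ∑ x ∈ B i, f i x) (mem_univ i0)]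
    have hi0 : ∑ x ∈ B i0, f i0 x = 1 := by
      simp [hB, hf]
    rw [hi0, one_mul]
    refine Finset.prod_congr rfl fun i hi => ?_
    have hBi : B i = univ := by simp [hB, (Finset.mem_erase.mp hi).1]
    rw [hBi]
  rw [h2]
  apply Finset.sum_nbij' (i := fun a => Function.update a i0 0)
    (j := fun p => Function.update p i0 (-∑ i ∈ univ.erase i0, p i))
  · intro a ha
    rw [Fintype.mem_piFinset]
    intro i
    rcases eq_or_ne i i0 with rfl | hi
    · simp [hB]
    · simp [hB, hi, Function.update_of_ne hi]
  · intro p hp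
    simp only [mem_filter, mem_univ, true_and]
    rw [Finset.sum_update_of_mem (mem_univ i0), ← Finset.erase_eq, neg_add_cancel]
  · intro a ha
    simp only [mem_filter, mem_univ, true_and] at ha
    have hsum : ∀ i ∈ univ.erase i0, Function.update a i0 0 i = a i := by
      intro i hi
      exact Function.update_of_ne (Finset.mem_erase.mp hi).1 _ _
    rw [Function.update_idem, Finset.sum_congr rfl hsum]
    have hai0 : a i0 = -∑ i ∈ univ.erase i0, a i := by
      have h3 := Finset.add_sum_erase univ a (mem_univ i0)
      rw [ha] at h3
      exact eq_neg_of_add_eq_zero_left h3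
    rw [← hai0, Function.update_eq_self]
  · intro p hp
    rw [Function.update_idem]
    have hp0 : p i0 = 0 := by
      rw [Fintype.mem_piFinset] at hp
      have h5 := hp i0
      simpa [hB] using h5
    rw [← hp0, Function.update_eq_self]
  · intro a ha
    refine Finset.prod_congr rfl fun i _ => ?_
    rcases eq_or_ne i i0 with rfl | hi
    · rw [hf, Function.update_self, hf]
    · rw [Function.update_of_ne hi]

lemma Jsum_scale {n : ℕ} (χ : Fin n → MulChar F ℂ) {α : F} (hα : α ≠ 0) :
    Jsum n χ α = (∏ i, χ i) α * Jsum n χ 1 := by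
  unfold Jsum
  rw [Finset.mul_sum]
  apply Finset.sum_nbij' (i := fun b => fun i => α⁻¹ * b i) (j := fun a => fun i => α * a i)
  · intro b hb
    simp only [mem_filter, mem_univ, true_and] at hb ⊢
    rw [← Finset.mul_sum, hb, inv_mul_cancel₀ hα]
  · intro a ha
    simp only [mem_filter, mem_univ, true_and] at ha ⊢
    rw [← Finset.mul_sum, ha, mul_one]
  · intro b _
    funext i
    rw [mul_inv_cancel_left₀ hα]
  · intro a _
    funext i
    rw [inv_mul_cancel_left₀ hα]
  · intro b _
    rw [prod_mulChar_apply univ χ hα, ← Finset.prod_mul_distrib]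
    refine Finset.prod_congr rfl fun i _ => ?_
    rw [← map_mul, mul_inv_cancel_left₀ hα]

lemma Jsum_zero_eq {n : ℕ} (hn : 0 < n) (χ : Fin n → MulChar F ℂ) (hχ : ∀ i, χ i ≠ 1) :
    Jsum n χ 0 =
      if (∏ i, χ i) = 1 then -((Fintype.card F : ℂ) - 1) * Jsum n χ 1 else 0 := by
  have hq2 : 1 < Fintype.card F := Fintype.one_lt_card
  have htot : ∑ α : F, Jsum n χ α = 0 := by
    unfold Jsum
    rw [Finset.sum_fiberwise_of_maps_to (fun a _ => mem_univ (∑ i, a i))]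
    rw [← Fintype.piFinset_univ, ← Finset.prod_univ_sum]
    apply Finset.prod_eq_zero (mem_univ (⟨0, hn⟩ : Fin n))
    exact MulChar.sum_eq_zero_of_ne_one (hχ _)
  have hsplit := Finset.add_sum_erase univ (Jsum n χ) (mem_univ (0 : F))
  rw [htot] at hsplit
  have herase : ∑ α ∈ univ.erase (0 : F), Jsum n χ α
      = (∑ α ∈ univ.erase (0 : F), (∏ i, χ i) α) * Jsum n χ 1 := by
    rw [Finset.sum_mul]
    exact Finset.sum_congr rfl fun α hα => Jsum_scale χ (Finset.mem_erase.mp hα).1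
  have hsum2 : ∑ α ∈ univ.erase (0 : F), (∏ i, χ i) α
      = if (∏ i, χ i) = 1 then ((Fintype.card F : ℂ) - 1) else 0 := by
    split_ifs with h
    · have hone : ∀ α ∈ univ.erase (0 : F), (∏ i, χ i) α = 1 := by
        intro α hα
        rw [h]
        exact MulChar.one_apply (Ne.isUnit (Finset.mem_erase.mp hα).1)
      rw [Finset.sum_congr rfl hone, Finset.sum_const, nsmul_eq_mul, mul_one,
        Finset.card_erase_of_mem (mem_univ 0), Finset.card_univ]
      push_cast [Nat.cast_sub hq2.le]
      ring
    · rw [Finset.sum_erase _ (MulChar.map_nonunit _ not_isUnit_zero)]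
      exact MulChar.sum_eq_zero_of_ne_one h
  have hkey : Jsum n χ 0 = -∑ α ∈ univ.erase (0 : F), Jsum n χ α :=
    eq_neg_of_add_eq_zero_left hsplit
  rw [hkey, herase, hsum2]
  split_ifs with h
  · ring
  · ring

end WeilDiagonalAux

open WeilDiagonalAux

/-- Weil: the number of affine points on x₁^d + ⋯ + x_n^d = 0 equals
q^{n-1} - (q-1)·∑_{w*} J(T^{w₁(q-1)/t},…,T^{w_n(q-1)/t}), sum over 0 < wᵢ < t,
t ∣ ∑wᵢ, where t = gcd(d, q-1) and T generates the character group. -/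
theorem weil_diagonal_count {F : Type} [Field F] [Fintype F] [DecidableEq F]
    (n d : ℕ) (hn : 0 < n) (hd : 0 < d)
    (T : MulChar F ℂ) (hT : ∀ χ : MulChar F ℂ, ∃ k : ℕ, χ = T ^ k) :
    (Fintype.card {x : Fin n → F // ∑ i, x i ^ d = 0} : ℂ) =
      (Fintype.card F : ℂ) ^ (n - 1) -
        ((Fintype.card F : ℂ) - 1) *
          ∑ w ∈ (Fintype.piFinset fun _ : Fin n =>
                Finset.range (Nat.gcd d (Fintype.card F - 1))).filter
              (fun w => (∀ i, 0 < w i) ∧ Nat.gcd d (Fintype.card F - 1) ∣ ∑ i, w i),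
            Jsum n (fun i =>
              T ^ (w i * ((Fintype.card F - 1) / Nat.gcd d (Fintype.card F - 1)))) 1 := by
  classical
  have hq2 : 1 < Fintype.card F := Fintype.one_lt_card
  set t := Nat.gcd d (Fintype.card F - 1) with htdef
  set m := (Fintype.card F - 1) / t with hmdef
  have ht0 : 0 < t := Nat.gcd_pos_of_pos_left _ hd
  have htm : t * m = Fintype.card F - 1 := Nat.mul_div_cancel' (Nat.gcd_dvd_right _ _)
  have hm0 : 0 < m := by
    rcases Nat.eq_zero_or_pos m with h | h
    · rw [h, mul_zero] at htm; omega
    · exact h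
  have hne1 : ∀ j : ℕ, 0 < j → j < t → T ^ (j * m) ≠ 1 := by
    intro j hj hjt
    apply T_pow_ne_one T hT (Nat.mul_pos hj hm0)
    calc j * m < t * m := (Nat.mul_lt_mul_right hm0).mpr hjt
    _ = Fintype.card F - 1 := htm
  have hTQ : T ^ (Fintype.card F - 1) = 1 := by
    rw [← orderOf_T T hT, pow_orderOf_eq_one]
  set c : ℕ → F → ℂ := fun j b => if j = 0 then 1 else (T ^ (j * m)) b with hc
  -- Step A: fiberwise counting
  have stepA : (Fintype.card {x : Fin n → F // ∑ i, x i ^ d = 0} : ℂ)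
      = ∑ a ∈ univ.filter (fun a : Fin n → F => ∑ i, a i = 0),
          ∏ i, (((univ.filter fun x : F => x ^ d = a i)).card : ℂ) := by
    rw [Fintype.card_subtype]
    rw [Finset.card_eq_sum_card_fiberwise
        (f := fun (x : Fin n → F) => fun i => x i ^ d)
        (t := univ.filter (fun a : Fin n → F => ∑ i, a i = 0))
        (fun x hx => by
          simp only [Finset.mem_coe, mem_filter, mem_univ, true_and] at hx ⊢
          exact hx)]
    push_cast
    refine Finset.sum_congr rfl fun a ha => ?_
    rw [Finset.mem_filter] at ha
    have hfib : ((univ.filter fun x : Fin n → F => ∑ i, x i ^ d = 0).filter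
          (fun x : Fin n → F => (fun i => x i ^ d) = a))
        = Fintype.piFinset fun i => univ.filter fun y : F => y ^ d = a i := by
      ext x
      simp only [Finset.mem_filter, mem_univ, true_and, Fintype.mem_piFinset, funext_iff]
      exact ⟨fun h => h.2, fun h => ⟨by simp_rw [h]; exact ha.2, h⟩⟩
    rw [hfib, Fintype.card_piFinset]
    push_cast
    rfl
  rw [stepA]
  -- Step B/C: expand counts into characters and swap sums
  have stepB : ∀ a : Fin n → F,
      ∏ i, (((univ.filter fun x : F => x ^ d = a i)).card : ℂ)
        = ∑ w ∈ Fintype.piFinset (fun _ : Fin n => range t), ∏ i, c (w i) (a i) := by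
    intro a
    calc ∏ i, (((univ.filter fun x : F => x ^ d = a i)).card : ℂ)
        = ∏ i, ∑ j ∈ range t, c j (a i) :=
          Finset.prod_congr rfl fun i _ => count_eq T hT hd (a i)
    _ = ∑ w ∈ Fintype.piFinset (fun _ : Fin n => range t), ∏ i, c (w i) (a i) :=
          Finset.prod_univ_sum (fun _ : Fin n => range t) (fun i j => c j (a i))
  rw [Finset.sum_congr rfl (fun a _ => stepB a), Finset.sum_comm]
  -- split according to the predicate P
  rw [← Finset.sum_filter_add_sum_filter_not (Fintype.piFinset fun _ : Fin n => range t)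
      (fun w => (∀ i, 0 < w i) ∧ t ∣ ∑ i, w i)]
  -- identify S w with Jsum for all-positive w
  have hSJ : ∀ w ∈ (Fintype.piFinset fun _ : Fin n => range t),
      (∀ i, 0 < w i) →
      ∑ a ∈ univ.filter (fun a : Fin n → F => ∑ i, a i = 0), ∏ i, c (w i) (a i)
        = Jsum n (fun i => T ^ (w i * m)) 0 := by
    intro w _ hwpos
    unfold Jsum
    refine Finset.sum_congr rfl fun a _ => Finset.prod_congr rfl fun i _ => ?_
    rw [hc]
    exact if_neg (hwpos i).ne'
  have hprodT : ∀ w : Fin n → ℕ, (∏ i, T ^ (w i * m)) = T ^ ((∑ i, w i) * m) := by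
    intro w
    rw [Finset.prod_pow_eq_pow_sum, ← Finset.sum_mul]
  have hcrit : ∀ w : Fin n → ℕ, ((T ^ ((∑ i, w i) * m) = 1) ↔ t ∣ ∑ i, w i) := by
    intro w
    constructor
    · intro h
      have h2 := orderOf_dvd_of_pow_eq_one h
      rw [orderOf_T T hT, ← htm] at h2
      exact (Nat.mul_dvd_mul_iff_right hm0).mp h2
    · rintro ⟨s, hs⟩
      have hms : t * s * m = (Fintype.card F - 1) * s := by rw [← htm]; ring
      rw [hs, hms, pow_mul, hTQ, one_pow]
  -- Part 1 : the filtered sum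
  have part1 : ∑ w ∈ (Fintype.piFinset fun _ : Fin n => range t).filter
        (fun w => (∀ i, 0 < w i) ∧ t ∣ ∑ i, w i),
      (∑ a ∈ univ.filter (fun a : Fin n → F => ∑ i, a i = 0), ∏ i, c (w i) (a i))
      = -((Fintype.card F : ℂ) - 1) *
          ∑ w ∈ (Fintype.piFinset fun _ : Fin n => range t).filter
            (fun w => (∀ i, 0 < w i) ∧ t ∣ ∑ i, w i),
            Jsum n (fun i => T ^ (w i * m)) 1 := by
    rw [Finset.mul_sum]
    refine Finset.sum_congr rfl fun w hw => ?_
    obtain ⟨hwW, hwpos, hwdvd⟩ := Finset.mem_filter.mp hw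
    have hwlt : ∀ i, w i < t := fun i => Finset.mem_range.mp (Fintype.mem_piFinset.mp hwW i)
    rw [hSJ w hwW hwpos,
      Jsum_zero_eq hn _ (fun i => hne1 (w i) (hwpos i) (hwlt i)),
      if_pos (by rw [hprodT w]; exact (hcrit w).mpr hwdvd)]
  -- Part 2 : the complementary sum
  have part2 : ∑ w ∈ (Fintype.piFinset fun _ : Fin n => range t).filter
        (fun w => ¬((∀ i, 0 < w i) ∧ t ∣ ∑ i, w i)),
      (∑ a ∈ univ.filter (fun a : Fin n → F => ∑ i, a i = 0), ∏ i, c (w i) (a i))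
      = (Fintype.card F : ℂ) ^ (n - 1) := by
    rw [Finset.sum_eq_single_of_mem (fun _ : Fin n => 0)]
    · -- value at w = 0
      rw [sum_constrained_eq (fun i b => c 0 b) ⟨0, hn⟩ (fun x => by simp [hc])]
      have hval : ∀ i ∈ univ.erase (⟨0, hn⟩ : Fin n), ∑ x : F, c 0 x = (Fintype.card F : ℂ) := by
        intro i _
        rw [hc]
        simp
      rw [Finset.prod_congr rfl hval, Finset.prod_const,
        Finset.card_erase_of_mem (mem_univ _), Finset.card_univ, Fintype.card_fin]
    · -- membership
      rw [Finset.mem_filter]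
      constructor
      · rw [Fintype.mem_piFinset]
        intro i
        exact Finset.mem_range.mpr ht0
      · rintro ⟨h1, -⟩
        exact lt_irrefl 0 (h1 ⟨0, hn⟩)
    · -- other w give 0
      intro w hw hwne
      obtain ⟨hwW, hwnP⟩ := Finset.mem_filter.mp hw
      have hwlt : ∀ i, w i < t := fun i => Finset.mem_range.mp (Fintype.mem_piFinset.mp hwW i)
      by_cases hzero : ∃ i0, w i0 = 0
      · obtain ⟨i0, hi0⟩ := hzero
        rw [sum_constrained_eq (fun i b => c (w i) b) i0
          (fun x => by simp [hc, hi0])]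
        have hex : ∃ i1, w i1 ≠ 0 := by
          by_contra hcon
          push_neg at hcon
          exact hwne (funext fun i => hcon i)
        obtain ⟨i1, hi1⟩ := hex
        have hi10 : i1 ≠ i0 := by
          rintro rfl
          exact hi1 hi0
        apply Finset.prod_eq_zero (Finset.mem_erase.mpr ⟨hi10, mem_univ i1⟩)
        have hterm : ∀ x : F, c (w i1) x = (T ^ (w i1 * m)) x := by
          intro x
          rw [hc]
          exact if_neg hi1
        rw [Finset.sum_congr rfl (fun x _ => hterm x)]
        exact MulChar.sum_eq_zero_of_ne_one
          (hne1 (w i1) (Nat.pos_of_ne_zero hi1) (hwlt i1))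
      · push_neg at hzero
        have hwpos : ∀ i, 0 < w i := fun i => Nat.pos_of_ne_zero (hzero i)
        have hndvd : ¬ t ∣ ∑ i, w i := fun hdvd => hwnP ⟨hwpos, hdvd⟩
        rw [hSJ w hwW hwpos,
          Jsum_zero_eq hn _ (fun i => hne1 (w i) (hwpos i) (hwlt i)),
          if_neg (by rw [hprodT w]; exact fun hcon => hndvd ((hcrit w).mp hcon))]
  rw [part1, part2]
  ring
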